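/- In the upper half-plane model of H², fix ideal points b_{i-1}, b_{i+1} on the real axis and b_i = ∞. Let s_{i-1}, s_i be points on circles (hyperbolic geodesic-perpendicular loci) centered at b_{i-1}, b_{i+1} at hyperbolic distances δ_{i-1}, δ_i from the geodesics b_{i-1}b_{i+1}. If the points are moved along the perpendicular geodesics to new positions with distances δ'_{i-1}, δ'_i satisfying cosh δ_{i-1}/cosh δ'_{i-1} = cosh δ_i/cosh δ'_i, then the new points s'_{i-1} and s'_i lie at the same Euclidean height, hence on a common horocycle based at b_i = ∞. -/
import Mathlib


noncomputable section

open Complex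

/-- In the upper half-plane model with `b_i = ∞` and ideal points
`b_{i-1}, b_{i+1}` on the real axis, let `s_{i-1}, s_i` lie on Euclidean circles centered
at `b_{i-1}, b_{i+1}` at hyperbolic distances `δ_{i-1}, δ_i` from the corresponding
geodesics, the Euclidean angles `ψ` satisfying `cosh δ · sin ψ = 1`.  If both points lie
on a common horocycle based at `∞` (same Euclidean height) and they are moved along the
perpendicular geodesics to new positions with `cosh δ_{i-1}/cosh δ'_{i-1} =
cosh δ_i/cosh δ'_i`, then the new points have the same Euclidean height, hence lie on a
common horocycle based at `b_i = ∞`. -/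
theorem same_horocycle_after_cosh_ratio_move
    (b₁ b₂ R₁ R₂ δ₁ δ₂ δ₁' δ₂' ψ₁ ψ₂ ψ₁' ψ₂' : ℝ)
    (hR₁ : 0 < R₁) (hR₂ : 0 < R₂)
    (hψ₁ : Real.cosh δ₁ * Real.sin ψ₁ = 1) (hψ₂ : Real.cosh δ₂ * Real.sin ψ₂ = 1)
    (hψ₁' : Real.cosh δ₁' * Real.sin ψ₁' = 1) (hψ₂' : Real.cosh δ₂' * Real.sin ψ₂' = 1)
    (hratio : Real.cosh δ₁ / Real.cosh δ₁' = Real.cosh δ₂ / Real.cosh δ₂')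
    (s₁ s₂ s₁' s₂' : ℂ)
    (hs₁ : s₁ = (b₁ : ℂ) + R₁ * Complex.exp (ψ₁ * Complex.I))
    (hs₂ : s₂ = (b₂ : ℂ) + R₂ * Complex.exp (ψ₂ * Complex.I))
    (hs₁' : s₁' = (b₁ : ℂ) + R₁ * Complex.exp (ψ₁' * Complex.I))
    (hs₂' : s₂' = (b₂ : ℂ) + R₂ * Complex.exp (ψ₂' * Complex.I))
    (hsame : s₁.im = s₂.im) :
    s₁'.im = s₂'.im := by
  have him : ∀ (b R ψ : ℝ), ((b : ℂ) + R * Complex.exp (ψ * Complex.I)).im = R * Real.sin ψ := by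
    intro b R ψ
    simp [Complex.exp_mul_I, Complex.add_im, Complex.mul_im, ← Complex.ofReal_sin]
  have hc₁ : (1:ℝ) ≤ Real.cosh δ₁ := Real.one_le_cosh δ₁
  have hc₂ : (1:ℝ) ≤ Real.cosh δ₂ := Real.one_le_cosh δ₂
  have hc₁' : (1:ℝ) ≤ Real.cosh δ₁' := Real.one_le_cosh δ₁'
  have hc₂' : (1:ℝ) ≤ Real.cosh δ₂' := Real.one_le_cosh δ₂'
  have hn₁ : Real.cosh δ₁ ≠ 0 := by linarith
  have hn₂ : Real.cosh δ₂ ≠ 0 := by linarith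
  have hn₁' : Real.cosh δ₁' ≠ 0 := by linarith
  have hn₂' : Real.cosh δ₂' ≠ 0 := by linarith
  have hsin₁ : Real.sin ψ₁ = 1 / Real.cosh δ₁ := by field_simp; linarith
  have hsin₂ : Real.sin ψ₂ = 1 / Real.cosh δ₂ := by field_simp; linarith
  have hsin₁' : Real.sin ψ₁' = 1 / Real.cosh δ₁' := by field_simp; linarith
  have hsin₂' : Real.sin ψ₂' = 1 / Real.cosh δ₂' := by field_simp; linarith
  rw [hs₁, hs₂, him, him, hsin₁, hsin₂] at hsame
  rw [hs₁', hs₂', him, him, hsin₁', hsin₂']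
  have key : R₁ / Real.cosh δ₁ = R₂ / Real.cosh δ₂ := by
    field_simp at hsame ⊢; linarith
  have : R₁ / Real.cosh δ₁' = R₂ / Real.cosh δ₂' := by
    field_simp at key hratio ⊢
    nlinarith [Real.cosh_pos δ₁, Real.cosh_pos δ₂, Real.cosh_pos δ₁', Real.cosh_pos δ₂']
  field_simp at this ⊢; linarith
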